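/- Continuous Sylvester inertia decomposition: let G : X → GL(m, ℂ) ∩ Her(m, ℂ) be a continuous family of invertible Hermitian matrices on a topological space X, and suppose at every point exactly p eigenvalues are positive and m - p are negative. Then locally near every point x₀ there exists a continuous N : U → GL(m, ℂ) such that N(x)* G(x) N(x) = diag(I_p, -I_{m-p}) for all x ∈ U. -/

import Mathlib

open Matrix
open scoped ComplexOrder

namespace Stmt14Aux

variable {m : ℕ}

/-- standard basis vector with natural index -/
def eb (m : ℕ) (k : ℕ) : Fin m → ℂ := fun i => if (i : ℕ) = k then 1 else 0

/-- indefinite inner product -/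
noncomputable def ip (H : Matrix (Fin m) (Fin m) ℂ) (u v : Fin m → ℂ) : ℂ :=
  star u ⬝ᵥ H *ᵥ v

/-- Gram-Schmidt w.r.t. the form `ip H` applied to the standard basis -/
noncomputable def gs (H : Matrix (Fin m) (Fin m) ℂ) : ℕ → (Fin m → ℂ)
  | k => eb m k - ∑ j ∈ (Finset.range k).attach,
      (ip H (gs H j.1) (eb m k) / ip H (gs H j.1) (gs H j.1)) • gs H j.1
  termination_by k => k
  decreasing_by exact Finset.mem_range.mp j.2

theorem gs_def (H : Matrix (Fin m) (Fin m) ℂ) (k : ℕ) :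
    gs H k = eb m k - ∑ j ∈ Finset.range k,
      (ip H (gs H j) (eb m k) / ip H (gs H j) (gs H j)) • gs H j := by
  rw [gs]
  congr 1
  exact Finset.sum_attach (Finset.range k) (fun j => (ip H (gs H j) (eb m k) / ip H (gs H j) (gs H j)) • gs H j)


theorem ip_sub_right (H : Matrix (Fin m) (Fin m) ℂ) (u v w : Fin m → ℂ) :
    ip H u (v - w) = ip H u v - ip H u w := by
  simp [ip, Matrix.mulVec_sub, dotProduct_sub]

theorem ip_smul_right (H : Matrix (Fin m) (Fin m) ℂ) (c : ℂ) (u v : Fin m → ℂ) :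
    ip H u (c • v) = c * ip H u v := by
  simp [ip, Matrix.mulVec_smul, dotProduct_smul, smul_eq_mul]

theorem ip_sum_right (H : Matrix (Fin m) (Fin m) ℂ) (u : Fin m → ℂ) {ι : Type*}
    (s : Finset ι) (f : ι → Fin m → ℂ) :
    ip H u (∑ j ∈ s, f j) = ∑ j ∈ s, ip H u (f j) := by
  classical
  induction s using Finset.induction with
  | empty => simp [ip]
  | insert a s h ih =>
    rw [Finset.sum_insert h, Finset.sum_insert h, ← ih]
    simp [ip, Matrix.mulVec_add, dotProduct_add]

theorem ip_conj {H : Matrix (Fin m) (Fin m) ℂ} (hH : H.IsHermitian)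
    (u v : Fin m → ℂ) : star (ip H u v) = ip H v u := by
  have h1 : star (star u ⬝ᵥ H *ᵥ v) = star (H *ᵥ v) ⬝ᵥ u := by
    rw [Matrix.star_dotProduct]; simp
  rw [ip, h1, Matrix.star_mulVec, ip, ← Matrix.dotProduct_mulVec, hH.eq]


theorem gs_apply_of_lt (H : Matrix (Fin m) (Fin m) ℂ) :
    ∀ k (i : Fin m), k < (i : ℕ) → gs H k i = 0 := by
  intro k
  induction k using Nat.strong_induction_on with
  | _ k ih =>
    intro i hi
    rw [gs_def]
    have h1 : eb m k i = 0 := by simp [eb, Nat.ne_of_lt' hi]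
    have h2 : ∀ j ∈ Finset.range k,
        ((ip H (gs H j) (eb m k) / ip H (gs H j) (gs H j)) • gs H j) i = 0 := by
      intro j hj
      have := ih j (Finset.mem_range.mp hj) i (lt_trans (Finset.mem_range.mp hj) hi)
      simp [this]
    simp only [Pi.sub_apply, Finset.sum_apply, h1, Finset.sum_eq_zero h2, sub_zero]

theorem gs_apply_self (H : Matrix (Fin m) (Fin m) ℂ) (k : ℕ) (i : Fin m)
    (hik : (i : ℕ) = k) : gs H k i = 1 := by
  rw [gs_def]
  have h1 : eb m k i = 1 := by simp [eb, hik]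
  have h2 : ∀ j ∈ Finset.range k,
      ((ip H (gs H j) (eb m k) / ip H (gs H j) (gs H j)) • gs H j) i = 0 := by
    intro j hj
    have := gs_apply_of_lt H j i (hik ▸ Finset.mem_range.mp hj)
    simp [this]
  simp only [Pi.sub_apply, Finset.sum_apply, h1, Finset.sum_eq_zero h2, sub_zero]

theorem gs_orth {H : Matrix (Fin m) (Fin m) ℂ} (hH : H.IsHermitian) :
    ∀ k, (∀ i, i < k → ip H (gs H i) (gs H i) ≠ 0) →
      ∀ j, j < k → ip H (gs H j) (gs H k) = 0 := by
  intro k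
  induction k using Nat.strong_induction_on with
  | _ k ih =>
    intro hd j hj
    have horth : ∀ i ∈ Finset.range k, i ≠ j → ip H (gs H j) (gs H i) = 0 := by
      intro i hik hij
      rcases lt_or_gt_of_ne hij with hlt | hgt
      · -- i < j, use symmetry and induction at j... ip (gs j)(gs i) = star (ip (gs i)(gs j))
        have := ih j hj (fun a ha => hd a (lt_trans ha hj)) i hlt
        rw [← ip_conj hH, this, star_zero]
      · exact ih i (Finset.mem_range.mp hik) (fun a ha => hd a (lt_trans ha (Finset.mem_range.mp hik))) j hgt
    conv_lhs => rw [gs_def H k]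
    rw [ip_sub_right, ip_sum_right]
    rw [Finset.sum_eq_single j]
    · rw [ip_smul_right, div_mul_cancel₀ _ (hd j hj), sub_self]
    · intro i hik hij
      rw [ip_smul_right, horth i hik hij, mul_zero]
    · intro hjk; exact absurd (Finset.mem_range.mpr hj) hjk

theorem ip_diagonal_eb (δ : Fin m → ℂ) (j k : ℕ) (hjk : j ≠ k) :
    ip (Matrix.diagonal δ) (eb m j) (eb m k) = 0 := by
  rw [ip]
  apply Finset.sum_eq_zero
  intro i _
  rcases eq_or_ne ((i : ℕ)) k with hik | hik
  · have : star (eb m j) i = 0 := by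
      simp only [Pi.star_apply, eb]
      rw [if_neg (by rw [hik]; exact Ne.symm hjk), star_zero]
    rw [this, zero_mul]
  · have : (Matrix.diagonal δ *ᵥ eb m k) i = 0 := by
      rw [Matrix.mulVec_diagonal]
      simp [eb, hik]
    rw [this, mul_zero]

theorem gs_diagonal (δ : Fin m → ℂ) : ∀ k, gs (Matrix.diagonal δ) k = eb m k := by
  intro k
  induction k using Nat.strong_induction_on with
  | _ k ih =>
    rw [gs_def]
    have : ∀ j ∈ Finset.range k,
        (ip (Matrix.diagonal δ) (gs (Matrix.diagonal δ) j) (eb m k) /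
          ip (Matrix.diagonal δ) (gs (Matrix.diagonal δ) j) (gs (Matrix.diagonal δ) j)) •
            gs (Matrix.diagonal δ) j = 0 := by
      intro j hj
      rw [ih j (Finset.mem_range.mp hj), ip_diagonal_eb δ j k (Nat.ne_of_lt (Finset.mem_range.mp hj)),
        zero_div, zero_smul]
    rw [Finset.sum_congr rfl this]
    simp

theorem ip_diagonal_eb_self (δ : Fin m → ℂ) (k : Fin m) :
    ip (Matrix.diagonal δ) (eb m k) (eb m k) = δ k := by
  rw [ip, dotProduct]
  rw [Finset.sum_eq_single k]
  · rw [Matrix.mulVec_diagonal]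
    simp [eb]
  · intro i _ hik
    have : star (eb m (k : ℕ)) i = 0 := by
      simp [eb]; exact fun h => absurd (Fin.ext h) hik
    rw [this, zero_mul]
  · simp


theorem ip_eq_sum (H : Matrix (Fin m) (Fin m) ℂ) (u v : Fin m → ℂ) :
    ip H u v = ∑ i, star (u i) * ∑ j, H i j * v j := by
  simp [ip, dotProduct, Matrix.mulVec]

theorem conjTranspose_mul_mul_apply (A M : Matrix (Fin m) (Fin m) ℂ) (j k : Fin m) :
    (Aᴴ * M * A) j k = ip M (fun i => A i j) (fun i => A i k) := by
  rw [ip_eq_sum]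
  simp only [Matrix.mul_apply, Matrix.conjTranspose_apply, Finset.sum_mul, Finset.mul_sum]
  rw [Finset.sum_comm]
  apply Finset.sum_congr rfl
  intro a _
  apply Finset.sum_congr rfl
  intro b _
  ring

section Cont

variable {X : Type*} [TopologicalSpace X] {U : Set X}

theorem ip_continuousOn {H : X → Matrix (Fin m) (Fin m) ℂ} {u v : X → Fin m → ℂ}
    (hH : ContinuousOn H U) (hu : ContinuousOn u U) (hv : ContinuousOn v U) :
    ContinuousOn (fun x => ip (H x) (u x) (v x)) U := by
  simp only [ip_eq_sum]
  apply continuousOn_finset_sum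
  intro i _
  apply ContinuousOn.mul
  · exact continuous_star.comp_continuousOn ((continuous_apply i).comp_continuousOn hu)
  · apply continuousOn_finset_sum
    intro j _
    exact (((continuous_apply j).comp ((continuous_apply i).comp continuous_id)).comp_continuousOn
      hH).mul ((continuous_apply j).comp_continuousOn hv)

theorem matmul_continuousOn {f g : X → Matrix (Fin m) (Fin m) ℂ}
    (hf : ContinuousOn f U) (hg : ContinuousOn g U) :
    ContinuousOn (fun x => f x * g x) U := by
  rw [continuousOn_iff_continuous_restrict] at hf hg ⊢
  exact hf.matrix_mul hg

theorem gs_continuousOn {H : X → Matrix (Fin m) (Fin m) ℂ}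
    (hH : ContinuousOn H U) :
    ∀ k, (∀ j, j < k → ∀ x ∈ U, ip (H x) (gs (H x) j) (gs (H x) j) ≠ 0) →
      ContinuousOn (fun x => gs (H x) k) U := by
  intro k
  induction k using Nat.strong_induction_on with
  | _ k ih =>
    intro hd
    have hgs : ∀ j, j < k → ContinuousOn (fun x => gs (H x) j) U := fun j hj =>
      ih j hj (fun i hi => hd i (lt_trans hi hj))
    simp only [gs_def (H := H _) (k := k)]
    apply ContinuousOn.sub continuousOn_const
    apply continuousOn_finset_sum
    intro j hj
    have hj' := Finset.mem_range.mp hj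
    apply ContinuousOn.fun_smul
    · apply ContinuousOn.div
      · exact ip_continuousOn hH (hgs j hj') continuousOn_const
      · exact ip_continuousOn hH (hgs j hj') (hgs j hj')
      · exact fun x hx => hd j hj' x hx
    · exact hgs j hj'

end Cont

end Stmt14Aux

open Matrix
open scoped ComplexOrder

theorem Stmt14Aux.exists_N0 {m p : ℕ} (hp : p ≤ m) (A : Matrix (Fin m) (Fin m) ℂ) (hA : A.IsHermitian)
    (hdet : IsUnit A)
    (hpos : (Finset.univ.filter fun i => 0 < hA.eigenvalues i).card = p) :
    ∃ (N₀ : Matrix (Fin m) (Fin m) ℂ) (ev : Fin m → ℝ), IsUnit N₀ ∧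
      (N₀ᴴ * A * N₀ = Matrix.diagonal (fun k => ((ev k : ℝ) : ℂ))) ∧
      (∀ k : Fin m, ((k : ℕ) < p ↔ 0 < ev k)) ∧ (∀ k, ev k ≠ 0) := by
  classical
  set eig := hA.eigenvalues with heig
  have hdet' : A.det ≠ 0 := by
    have := (Matrix.isUnit_iff_isUnit_det _).mp hdet
    exact IsUnit.ne_zero this
  have hnz : ∀ i, eig i ≠ 0 := by
    intro i h0
    apply hdet'
    rw [hA.det_eq_prod_eigenvalues]
    apply Finset.prod_eq_zero (Finset.mem_univ i)
    rw [← heig, h0]; simp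
  set PosSet : Set (Fin m) := {i | 0 < eig i} with hPosSet
  have hcardpos : Fintype.card PosSet = p := by
    rw [← hpos, ← Set.toFinset_card]
    congr 1
    ext i
    simp [hPosSet]
  have hcardneg : Fintype.card (PosSetᶜ : Set (Fin m)) = m - p := by
    rw [Fintype.card_compl_set, hcardpos, Fintype.card_fin]
  have hm : m = p + (m - p) := (Nat.add_sub_cancel' hp).symm
  set e1 : Fin p ≃ PosSet := (Fintype.equivFinOfCardEq hcardpos).symm with he1
  set e2 : Fin (m - p) ≃ (PosSetᶜ : Set (Fin m)) := (Fintype.equivFinOfCardEq hcardneg).symm with he2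
  set σ : Equiv.Perm (Fin m) :=
    ((finCongr hm).trans finSumFinEquiv.symm).trans
      ((Equiv.sumCongr e1 e2).trans (Equiv.Set.sumCompl PosSet)) with hσdef
  have hσ : ∀ k : Fin m, ((k : ℕ) < p ↔ 0 < eig (σ k)) := by
    intro k
    rcases hcase : finSumFinEquiv.symm (finCongr hm k) with a | b
    · have hk : (k : ℕ) = (a : ℕ) := by
        have h2 := (Equiv.symm_apply_eq _).mp hcase
        rw [finSumFinEquiv_apply_left] at h2
        have := congrArg (fun t : Fin (p + (m - p)) => (t : ℕ)) h2
        simpa using this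
      have hσk : σ k = (e1 a : Fin m) := by
        simp only [hσdef, Equiv.trans_apply, hcase, Equiv.sumCongr_apply, Sum.map_inl,
          Equiv.Set.sumCompl_apply_inl]
      have hmem : (0 : ℝ) < eig (σ k) := by rw [hσk]; exact (e1 a).2
      exact ⟨fun _ => hmem, fun _ => hk ▸ a.isLt⟩
    · have hk : (k : ℕ) = p + (b : ℕ) := by
        have h2 := (Equiv.symm_apply_eq _).mp hcase
        rw [finSumFinEquiv_apply_right] at h2
        have := congrArg (fun t : Fin (p + (m - p)) => (t : ℕ)) h2
        simpa using this
      have hσk : σ k = (e2 b : Fin m) := by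
        simp only [hσdef, Equiv.trans_apply, hcase, Equiv.sumCongr_apply, Sum.map_inr,
          Equiv.Set.sumCompl_apply_inr]
      have hmem : ¬ (0 : ℝ) < eig (σ k) := by rw [hσk]; exact (e2 b).2
      constructor
      · intro h; omega
      · intro h; exact absurd h hmem
  set V : Matrix (Fin m) (Fin m) ℂ := (Matrix.IsHermitian.eigenvectorUnitary hA : Matrix (Fin m) (Fin m) ℂ) with hV
  have hV1 : star V * V = 1 := Matrix.mem_unitaryGroup_iff'.mp (Matrix.IsHermitian.eigenvectorUnitary hA).2
  have hV2 : V * star V = 1 := Matrix.mem_unitaryGroup_iff.mp (Matrix.IsHermitian.eigenvectorUnitary hA).2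
  have hVGV : Vᴴ * A * V = Matrix.diagonal (fun i => ((eig i : ℝ) : ℂ)) := by
    have hspec := hA.spectral_theorem
    calc Vᴴ * A * V = star V * (V * Matrix.diagonal (RCLike.ofReal ∘ eig) * star V) * V := by
          rw [← Matrix.star_eq_conjTranspose]; conv_lhs => rw [hspec, Unitary.conjStarAlgAut_apply]
      _ = (star V * V) * Matrix.diagonal (RCLike.ofReal ∘ eig) * (star V * V) := by
          simp only [Matrix.mul_assoc]
      _ = Matrix.diagonal (fun i => ((eig i : ℝ) : ℂ)) := by
          rw [hV1]; simp only [Matrix.one_mul, Matrix.mul_one]; rfl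
  set N₀ : Matrix (Fin m) (Fin m) ℂ := V.submatrix id σ with hN₀def
  have hN₀unit : IsUnit N₀ := by
    rw [Matrix.isUnit_iff_isUnit_det, hN₀def, Matrix.det_permute' σ V]
    apply IsUnit.mul
    · rcases Int.units_eq_one_or (Equiv.Perm.sign σ) with h | h <;> rw [h] <;> simp
    · exact IsUnit.of_mul_eq_one _ (by rw [← Matrix.det_mul, hV2, Matrix.det_one])
  have hH0 : N₀ᴴ * A * N₀ = Matrix.diagonal (fun k => ((eig (σ k) : ℝ) : ℂ)) := by
    have key : ∀ j k : Fin m, (N₀ᴴ * A * N₀) j k = (Vᴴ * A * V) (σ j) (σ k) := by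
      intro j k
      rw [Stmt14Aux.conjTranspose_mul_mul_apply, Stmt14Aux.conjTranspose_mul_mul_apply]
      rfl
    ext j k
    rw [key, hVGV]
    rcases eq_or_ne j k with h | h
    · subst h; simp [Matrix.diagonal_apply_eq]
    · rw [Matrix.diagonal_apply_ne _ (fun hc => h (σ.injective hc)), Matrix.diagonal_apply_ne _ h]
  exact ⟨N₀, fun k => eig (σ k), hN₀unit, hH0, hσ, fun k => hnz (σ k)⟩



/-- Continuous Sylvester inertia decomposition: a continuous family of invertible
Hermitian matrices with constant inertia `(p, m-p)` is locally continuously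
congruent to `diag(I_p, -I_{m-p})`. -/
theorem stmt14 {X : Type*} [TopologicalSpace X] {m p : ℕ} (hp : p ≤ m)
    (G : X → Matrix (Fin m) (Fin m) ℂ) (hGcont : Continuous G)
    (hGherm : ∀ x, (G x).IsHermitian) (hGinv : ∀ x, IsUnit (G x))
    (hGpos : ∀ x,
      (Finset.univ.filter fun i => 0 < (hGherm x).eigenvalues i).card = p)
    (hGneg : ∀ x,
      (Finset.univ.filter fun i => (hGherm x).eigenvalues i < 0).card = m - p) :
    ∀ x₀ : X, ∃ U ∈ nhds x₀, ∃ N : X → Matrix (Fin m) (Fin m) ℂ,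
      ContinuousOn N U ∧ (∀ x ∈ U, IsUnit (N x)) ∧
      ∀ x ∈ U, (N x)ᴴ * G x * N x =
        Matrix.diagonal (fun i : Fin m => if (i : ℕ) < p then (1 : ℂ) else -1) := by
  intro x₀
  classical
  obtain ⟨N₀, ev, hN₀unit, hH0, hσ, hevnz⟩ :=
    Stmt14Aux.exists_N0 hp (G x₀) (hGherm x₀) (hGinv x₀) (hGpos x₀)
  have hevneg : ∀ k : Fin m, ¬ ((k : ℕ) < p) → ev k < 0 := by
    intro k hk
    rcases lt_trichotomy (ev k) 0 with h | h | h
    · exact h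
    · exact absurd h (hevnz k)
    · exact absurd ((hσ k).mpr h) hk
  set H : X → Matrix (Fin m) (Fin m) ℂ := fun x => N₀ᴴ * G x * N₀ with hHdef
  have hHcont : Continuous H := (continuous_const.matrix_mul hGcont).matrix_mul continuous_const
  have hHherm : ∀ x, (H x).IsHermitian := fun x =>
    Matrix.isHermitian_conjTranspose_mul_mul N₀ (hGherm x)
  have hHx₀ : H x₀ = Matrix.diagonal (fun k => ((ev k : ℝ) : ℂ)) := hH0
  set d : ℕ → X → ℂ :=
    fun k x => Stmt14Aux.ip (H x) (Stmt14Aux.gs (H x) k) (Stmt14Aux.gs (H x) k) with hddef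
  have hdx₀ : ∀ k : Fin m, d (k : ℕ) x₀ = ((ev k : ℝ) : ℂ) := by
    intro k
    show Stmt14Aux.ip (H x₀) _ _ = _
    rw [hHx₀, Stmt14Aux.gs_diagonal, Stmt14Aux.ip_diagonal_eb_self]
  have hdreal : ∀ (k : ℕ) (x : X), ((d k x).re : ℂ) = d k x := by
    intro k x
    have h1 := Stmt14Aux.ip_conj (hHherm x) (Stmt14Aux.gs (H x) k) (Stmt14Aux.gs (H x) k)
    rw [← starRingEnd_apply] at h1
    exact Complex.conj_eq_iff_re.mp h1
  have hstep : ∀ k : ℕ, k ≤ m → ∃ U : Set X, IsOpen U ∧ x₀ ∈ U ∧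
      ∀ x ∈ U, ∀ j : Fin m, (j : ℕ) < k →
        (if (j : ℕ) < p then 0 < (d (j : ℕ) x).re else (d (j : ℕ) x).re < 0) := by
    intro k
    induction k with
    | zero =>
      exact fun _ => ⟨Set.univ, isOpen_univ, Set.mem_univ _,
        fun x _ j hj => absurd hj (Nat.not_lt_zero _)⟩
    | succ k ih =>
      intro hk1
      obtain ⟨U, hUo, hUx, hUg⟩ := ih (Nat.le_of_succ_le hk1)
      have hkm : k < m := hk1
      have hne : ∀ j, j < k → ∀ x ∈ U,
          Stmt14Aux.ip (H x) (Stmt14Aux.gs (H x) j) (Stmt14Aux.gs (H x) j) ≠ 0 := by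
        intro j hj x hx
        have hg := hUg x hx ⟨j, lt_trans hj hkm⟩ hj
        intro h0
        have hd0 : d j x = 0 := h0
        rw [hd0] at hg
        simp at hg
      have hcont : ContinuousOn (fun x => d k x) U :=
        Stmt14Aux.ip_continuousOn hHcont.continuousOn
          (Stmt14Aux.gs_continuousOn hHcont.continuousOn k hne)
          (Stmt14Aux.gs_continuousOn hHcont.continuousOn k hne)
      set s : Set ℂ := if k < p then {z : ℂ | 0 < z.re} else {z : ℂ | z.re < 0} with hs
      have hso : IsOpen s := by
        rw [hs]; split
        · exact isOpen_lt continuous_const Complex.continuous_re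
        · exact isOpen_lt Complex.continuous_re continuous_const
      have hx₀s : d k x₀ ∈ s := by
        have hk' : d k x₀ = ((ev ⟨k, hkm⟩ : ℝ) : ℂ) := hdx₀ ⟨k, hkm⟩
        rw [hs]
        by_cases hkp : k < p
        · rw [if_pos hkp]
          have : 0 < ev ⟨k, hkm⟩ := (hσ ⟨k, hkm⟩).mp hkp
          simp only [Set.mem_setOf_eq, hk', Complex.ofReal_re]
          exact this
        · rw [if_neg hkp]
          have := hevneg ⟨k, hkm⟩ hkp
          simp only [Set.mem_setOf_eq, hk', Complex.ofReal_re]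
          exact this
      refine ⟨U ∩ (fun x => d k x) ⁻¹' s, hcont.isOpen_inter_preimage hUo hso, ⟨hUx, hx₀s⟩, ?_⟩
      intro x hx j hj
      rcases Nat.lt_or_ge (j : ℕ) k with h | h
      · exact hUg x hx.1 j h
      · have hjk : (j : ℕ) = k := le_antisymm (Nat.lt_succ_iff.mp hj) h
        have hmem := hx.2
        simp only [Set.mem_preimage, hs] at hmem
        rw [hjk]
        by_cases hkp : k < p
        · rw [if_pos hkp]; rw [if_pos hkp] at hmem; exact hmem
        · rw [if_neg hkp]; rw [if_neg hkp] at hmem; exact hmem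
  obtain ⟨U, hUo, hUx, hUg⟩ := hstep m le_rfl
  have hgood : ∀ x ∈ U, ∀ j : Fin m,
      (if (j : ℕ) < p then 0 < (d (j : ℕ) x).re else (d (j : ℕ) x).re < 0) :=
    fun x hx j => hUg x hx j j.isLt
  have hrene : ∀ x ∈ U, ∀ j : Fin m, (d (j : ℕ) x).re ≠ 0 := by
    intro x hx j
    have := hgood x hx j
    split at this
    · exact ne_of_gt this
    · exact ne_of_lt this
  have hdne : ∀ x ∈ U, ∀ j : ℕ, j < m →
      Stmt14Aux.ip (H x) (Stmt14Aux.gs (H x) j) (Stmt14Aux.gs (H x) j) ≠ 0 := by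
    intro x hx j hj h0
    have hd0 : d j x = 0 := h0
    have := hrene x hx ⟨j, hj⟩
    rw [hd0] at this
    simp at this
  set sc : X → Fin m → ℂ :=
    fun x k => (((Real.sqrt |(d (k : ℕ) x).re|)⁻¹ : ℝ) : ℂ) with hscdef
  set gsM : X → Matrix (Fin m) (Fin m) ℂ :=
    fun x => Matrix.of fun i k : Fin m => Stmt14Aux.gs (H x) (k : ℕ) i with hgsMdef
  set N : X → Matrix (Fin m) (Fin m) ℂ :=
    fun x => N₀ * (gsM x * Matrix.diagonal (sc x)) with hNdef
  have hdcont : ∀ k : Fin m, ContinuousOn (fun x => d (k : ℕ) x) U := by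
    intro k
    have hne : ∀ j, j < (k : ℕ) → ∀ x ∈ U,
        Stmt14Aux.ip (H x) (Stmt14Aux.gs (H x) j) (Stmt14Aux.gs (H x) j) ≠ 0 :=
      fun j hj x hx => hdne x hx j (lt_trans hj k.isLt)
    exact Stmt14Aux.ip_continuousOn hHcont.continuousOn
      (Stmt14Aux.gs_continuousOn hHcont.continuousOn _ hne)
      (Stmt14Aux.gs_continuousOn hHcont.continuousOn _ hne)
  have hgsMcont : ContinuousOn gsM U := by
    rw [continuousOn_iff_continuous_restrict]
    apply continuous_matrix
    intro i k
    have hne : ∀ j, j < (k : ℕ) → ∀ x ∈ U,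
        Stmt14Aux.ip (H x) (Stmt14Aux.gs (H x) j) (Stmt14Aux.gs (H x) j) ≠ 0 :=
      fun j hj x hx => hdne x hx j (lt_trans hj k.isLt)
    have h1 := Stmt14Aux.gs_continuousOn hHcont.continuousOn (k : ℕ) hne
    exact ((continuous_apply i).comp_continuousOn h1).restrict
  have hsqrtne : ∀ x ∈ U, ∀ k : Fin m, Real.sqrt |(d (k : ℕ) x).re| ≠ 0 :=
    fun x hx k => ne_of_gt (Real.sqrt_pos.mpr (abs_pos.mpr (hrene x hx k)))
  have hdiagcont : ContinuousOn (fun x => Matrix.diagonal (sc x)) U := by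
    rw [continuousOn_iff_continuous_restrict]
    apply continuous_matrix
    intro i k
    rcases eq_or_ne i k with rfl | h
    · have h1 : ContinuousOn (fun x => sc x i) U := by
        apply Complex.continuous_ofReal.comp_continuousOn
        apply ContinuousOn.inv₀
        · exact (Real.continuous_sqrt.comp continuous_abs).comp_continuousOn
            (Complex.continuous_re.comp_continuousOn (hdcont i))
        · exact fun x hx => hsqrtne x hx i
      have h2 : ContinuousOn (fun x => Matrix.diagonal (sc x) i i) U := by
        simp only [Matrix.diagonal_apply_eq]
        exact h1
      exact h2.restrict
    · have h2 : ContinuousOn (fun x => Matrix.diagonal (sc x) i k) U := by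
        simp only [Matrix.diagonal_apply_ne _ h]
        exact continuousOn_const
      exact h2.restrict
  have hNcont : ContinuousOn N U :=
    Stmt14Aux.matmul_continuousOn continuousOn_const
      (Stmt14Aux.matmul_continuousOn hgsMcont hdiagcont)
  have hgsMdet : ∀ x : X, (gsM x).det = 1 := by
    intro x
    rw [Matrix.det_of_upperTriangular]
    · apply Finset.prod_eq_one
      intro i _
      exact Stmt14Aux.gs_apply_self _ _ _ rfl
    · intro i j hij
      exact Stmt14Aux.gs_apply_of_lt _ _ _ hij
  have hscne : ∀ x ∈ U, ∀ k : Fin m, sc x k ≠ 0 := by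
    intro x hx k
    simp only [hscdef, ne_eq, Complex.ofReal_eq_zero, inv_eq_zero]
    exact hsqrtne x hx k
  have hNunit : ∀ x ∈ U, IsUnit (N x) := by
    intro x hx
    apply hN₀unit.mul
    rw [Matrix.isUnit_iff_isUnit_det, Matrix.det_mul, hgsMdet, one_mul, Matrix.det_diagonal]
    exact isUnit_iff_ne_zero.mpr (Finset.prod_ne_zero_iff.mpr fun k _ => hscne x hx k)
  refine ⟨U, hUo.mem_nhds hUx, N, hNcont, hNunit, ?_⟩
  intro x hx
  have mid : (gsM x)ᴴ * H x * gsM x = Matrix.diagonal (fun k : Fin m => d (k : ℕ) x) := by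
    ext j k
    rw [Stmt14Aux.conjTranspose_mul_mul_apply]
    rcases eq_or_ne j k with rfl | h
    · rw [Matrix.diagonal_apply_eq]
      rfl
    · rw [Matrix.diagonal_apply_ne _ h]
      rcases Nat.lt_or_ge (j : ℕ) (k : ℕ) with hlt | hge
      · exact Stmt14Aux.gs_orth (hHherm x) (k : ℕ)
          (fun i hi => hdne x hx i (lt_trans hi k.isLt)) (j : ℕ) hlt
      · have hlt2 : (k : ℕ) < (j : ℕ) :=
          lt_of_le_of_ne hge (fun hc => h (Fin.ext hc.symm))
        show Stmt14Aux.ip (H x) (Stmt14Aux.gs (H x) (j : ℕ)) (Stmt14Aux.gs (H x) (k : ℕ)) = 0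
        rw [← Stmt14Aux.ip_conj (hHherm x),
          Stmt14Aux.gs_orth (hHherm x) (j : ℕ)
            (fun i hi => hdne x hx i (lt_trans hi j.isLt)) (k : ℕ) hlt2, star_zero]
  calc (N x)ᴴ * G x * N x
      = (Matrix.diagonal (sc x))ᴴ * ((gsM x)ᴴ * H x * gsM x) * Matrix.diagonal (sc x) := by
        simp only [hNdef, hHdef, Matrix.conjTranspose_mul, Matrix.mul_assoc]
    _ = (Matrix.diagonal (sc x))ᴴ * Matrix.diagonal (fun k : Fin m => d (k : ℕ) x) *
          Matrix.diagonal (sc x) := by rw [mid]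
    _ = Matrix.diagonal (fun i : Fin m => if (i : ℕ) < p then (1 : ℂ) else -1) := by
        rw [Matrix.diagonal_conjTranspose, Matrix.diagonal_mul_diagonal,
          Matrix.diagonal_mul_diagonal]
        apply congrArg Matrix.diagonal
        funext k
        have hgk := hgood x hx k
        simp only [Pi.mul_apply, Pi.star_apply, hscdef, Complex.star_def, Complex.conj_ofReal]
        rw [← hdreal (k : ℕ) x, ← Complex.ofReal_mul, ← Complex.ofReal_mul]
        simp only [Complex.ofReal_re]
        by_cases hkp : (k : ℕ) < p
        · rw [if_pos hkp]
          rw [if_pos hkp] at hgk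
          rw [abs_of_pos hgk, ← Complex.ofReal_one, Complex.ofReal_inj]
          have hs : Real.sqrt (d (k : ℕ) x).re ≠ 0 := ne_of_gt (Real.sqrt_pos.mpr hgk)
          field_simp
          rw [Real.sq_sqrt hgk.le]
        · rw [if_neg hkp]
          rw [if_neg hkp] at hgk
          rw [abs_of_neg hgk, show (-1 : ℂ) = ((-1 : ℝ) : ℂ) by norm_num, Complex.ofReal_inj]
          have hs : Real.sqrt (-(d (k : ℕ) x).re) ≠ 0 :=
            ne_of_gt (Real.sqrt_pos.mpr (neg_pos.mpr hgk))
          field_simp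
          rw [Real.sq_sqrt (neg_nonneg.mpr hgk.le)]
          ring
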